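/- For any dimension d ≥ 1 and any real ν with 0 < ν < d, there exists c(d,ν) > 0 such that for every finite block U ⊂ ℤ^d and every i ∈ U, ∑_{j ∈ U, j ≠ i} ‖i − j‖^(−ν) ≤ c(d,ν) · (1 + log|U|) · |U|^(1 − ν/d), where ‖·‖ is the sup-norm and |U| is the cardinality of U. -/

import Mathlib

open Finset

lemma sumB (s : ℝ) (hs0 : 0 < s) (hs1 : s < 1) (n : ℕ) :
    ∑ m ∈ Finset.range n, ((m : ℝ) + 1) ^ (-s) ≤ (1 + 1/(1-s)) * (n : ℝ) ^ (1 - s) := by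
  have h1s : (0:ℝ) < 1 - s := by linarith
  rcases Nat.eq_zero_or_pos n with hn | hn
  · subst hn; simp [Real.zero_rpow (ne_of_gt h1s)]
  obtain ⟨k, rfl⟩ : ∃ k, n = k + 1 := ⟨n - 1, (Nat.succ_pred_eq_of_pos hn).symm⟩
  have hsum : ∑ m ∈ Finset.range (k+1), ((m : ℝ) + 1) ^ (-s)
      = (∑ i ∈ Finset.range k, ((1:ℝ) + (i + 1 : ℕ)) ^ (-s)) + 1 := by
    rw [Finset.sum_range_succ' (fun m => ((m : ℝ) + 1) ^ (-s)) k]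
    norm_num
    apply Finset.sum_congr rfl
    intro i _
    push_cast
    ring_nf
  have hanti : AntitoneOn (fun x : ℝ => x ^ (-s)) (Set.Icc (1:ℝ) (1 + (k:ℕ))) := by
    intro x hx y hy hxy
    exact Real.rpow_le_rpow_of_nonpos (lt_of_lt_of_le one_pos hx.1) hxy (neg_nonpos.mpr hs0.le)
  have hint := hanti.sum_le_integral
  have hI : ∫ x in (1:ℝ)..(1 + (k:ℕ)), x ^ (-s)
      = ((1 + (k:ℝ)) ^ (-s + 1) - 1 ^ (-s + 1)) / (-s + 1) := by
    rw [integral_rpow (Or.inl (by linarith))]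
  have hle : (∑ i ∈ Finset.range k, ((1:ℝ) + (i + 1 : ℕ)) ^ (-s))
      ≤ ((1 + (k:ℝ)) ^ (1 - s)) / (1 - s) := by
    calc _ ≤ ∫ x in (1:ℝ)..(1 + (k:ℕ)), x ^ (-s) := hint
    _ = ((1 + (k:ℝ)) ^ (-s + 1) - 1 ^ (-s + 1)) / (-s + 1) := hI
    _ ≤ ((1 + (k:ℝ)) ^ (1 - s)) / (1 - s) := by
        rw [Real.one_rpow]
        have : (-s + 1) = 1 - s := by ring
        rw [this]
        gcongr <;> linarith
  have hpow1 : (1:ℝ) ≤ ((k:ℝ) + 1) ^ (1 - s) := by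
    apply Real.one_le_rpow (by push_cast; linarith) h1s.le
  rw [hsum]
  push_cast at hle ⊢
  rw [add_comm (1:ℝ) (k:ℝ)] at hle
  calc (∑ x ∈ Finset.range k, (1 + ((x:ℝ) + 1)) ^ (-s)) + 1
      ≤ ((k:ℝ)+1) ^ (1-s) / (1-s) + ((k:ℝ)+1) ^ (1-s) := by linarith
    _ = (1 + 1/(1-s)) * ((k:ℝ)+1) ^ (1-s) := by ring

lemma lemA {α : Type*} [DecidableEq α] (d : ℕ) (hd : 1 ≤ d) (ν : ℝ) (hν : 0 < ν)
    (g : α → ℕ) :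
    ∀ S : Finset α, (∀ j ∈ S, 1 ≤ g j) →
      (∀ k : ℕ, (S.filter fun j => g j ≤ k).card ≤ (2*k+1)^d) →
      ∑ j ∈ S, (g j : ℝ) ^ (-ν) ≤
        ∑ m ∈ Finset.range S.card, (3:ℝ)^ν * ((m:ℝ)+1) ^ (-(ν/d)) := by
  intro S
  induction S using Finset.strongInduction with
  | _ S ih =>
    intro hg1 hcount
    rcases S.eq_empty_or_nonempty with rfl | hS
    · simp
    obtain ⟨j₀, hj₀S, hj₀max⟩ := S.exists_max_image g hS
    have hgpos : 1 ≤ g j₀ := hg1 j₀ hj₀S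
    -- cardinality bound
    have hsub : S ⊆ S.filter fun j => g j ≤ g j₀ := fun j hj =>
      Finset.mem_filter.mpr ⟨hj, hj₀max j hj⟩
    have hcard0 : S.card ≤ (2 * g j₀ + 1)^d :=
      le_trans (Finset.card_le_card hsub) (hcount (g j₀))
    have hcard : S.card ≤ (3 * g j₀)^d := by
      refine hcard0.trans (Nat.pow_le_pow_left (by omega) d)
    -- key pointwise bound
    have hdpos : (0:ℝ) < d := by exact_mod_cast hd
    have hg0R : (0:ℝ) < (g j₀ : ℝ) := by exact_mod_cast hgpos
    have hkey : ((g j₀ : ℕ) : ℝ) ^ (-ν) ≤ (3:ℝ)^ν * ((S.card : ℝ)) ^ (-(ν/d)) := by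
      have h3g : (0:ℝ) < 3 * (g j₀:ℝ) := by linarith
      have hcR : (S.card : ℝ) ≤ (3 * (g j₀:ℝ))^(d:ℕ) := by
        calc (S.card:ℝ) ≤ (((3 * g j₀)^d : ℕ) : ℝ) := by exact_mod_cast hcard
          _ = (3 * (g j₀:ℝ))^(d:ℕ) := by push_cast; ring
      have h1 : (S.card:ℝ) ^ (ν/d) ≤ (3 * (g j₀:ℝ))^ν := by
        calc (S.card:ℝ) ^ (ν/d) ≤ ((3 * (g j₀:ℝ))^(d:ℕ)) ^ (ν/d) := by
              apply Real.rpow_le_rpow (Nat.cast_nonneg _) hcR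
              positivity
          _ = (3 * (g j₀:ℝ)) ^ ((d:ℝ) * (ν/d)) := by
              rw [← Real.rpow_natCast (3 * (g j₀:ℝ)) d, ← Real.rpow_mul h3g.le]
          _ = (3 * (g j₀:ℝ)) ^ ν := by
              rw [mul_div_cancel₀ ν (ne_of_gt hdpos)]
        -- done
      have hcardpos : (0:ℝ) < (S.card : ℝ) := by
        exact_mod_cast Finset.card_pos.mpr hS
      rw [Real.rpow_neg hg0R.le, Real.rpow_neg hcardpos.le]
      rw [← Real.inv_rpow hcardpos.le]
      have h2 : ((S.card:ℝ)⁻¹) ^ (ν/d) = ((S.card:ℝ) ^ (ν/d))⁻¹ := by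
        rw [Real.inv_rpow hcardpos.le]
      rw [h2]
      have h3 : ((3 * (g j₀:ℝ))^ν)⁻¹ ≤ ((S.card:ℝ) ^ (ν/d))⁻¹ := by
        apply inv_anti₀ (by positivity) h1
      calc ((g j₀:ℝ) ^ ν)⁻¹ = (3:ℝ)^ν * ((3 * (g j₀:ℝ))^ν)⁻¹ := by
            rw [Real.mul_rpow (by norm_num) hg0R.le]
            field_simp
          _ ≤ (3:ℝ)^ν * ((S.card:ℝ) ^ (ν/d))⁻¹ := by
            apply mul_le_mul_of_nonneg_left h3 (by positivity)
    -- induction step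
    have hj₀erase : j₀ ∉ S.erase j₀ := Finset.notMem_erase _ _
    have hSsplit : ∑ j ∈ S, (g j : ℝ) ^ (-ν)
        = ∑ j ∈ S.erase j₀, (g j : ℝ) ^ (-ν) + (g j₀ : ℝ) ^ (-ν) := by
      rw [Finset.sum_erase_add S _ hj₀S]
    have hcard' : S.card = (S.erase j₀).card + 1 := by
      exact (Finset.card_erase_add_one hj₀S).symm
    have hIH := ih (S.erase j₀) (Finset.erase_ssubset hj₀S)
      (fun j hj => hg1 j (Finset.mem_of_mem_erase hj))
      (fun k => le_trans (Finset.card_le_card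
        (Finset.filter_subset_filter _ (Finset.erase_subset _ _))) (hcount k))
    rw [hSsplit, hcard', Finset.sum_range_succ]
    have hlast : ((((S.erase j₀).card : ℝ)) + 1) = (S.card : ℝ) := by
      rw [hcard']; push_cast; ring
    apply add_le_add hIH
    rw [hlast]
    exact hkey

/-- Lemma 2.2 of Bulinski–Shashkin, case `0 < ν < d` (with a logarithmic factor
covering integer `ν` as well). -/
theorem stmt3 (d : ℕ) (hd : 1 ≤ d) (ν : ℝ) (hν0 : 0 < ν) (hνd : ν < d) :
    ∃ c : ℝ, 0 < c ∧ ∀ (a b i : Fin d → ℤ), i ∈ Finset.Icc a b →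
      ∑ j ∈ (Finset.Icc a b).erase i,
        ((Finset.univ.sup fun s => (i s - j s).natAbs : ℕ) : ℝ) ^ (-ν) ≤
        c * (1 + Real.log ((Finset.Icc a b).card)) *
          (((Finset.Icc a b).card : ℝ)) ^ (1 - ν / d) := by
  have hdpos : (0:ℝ) < d := by exact_mod_cast hd
  have hs0 : 0 < ν / d := div_pos hν0 hdpos
  have hs1 : ν / d < 1 := (div_lt_one hdpos).mpr hνd
  have h1s : (0:ℝ) < 1 - ν/d := by linarith [(div_lt_one hdpos).mpr hνd]
  refine ⟨(3:ℝ)^ν * (1 + 1/(1 - ν/d)), by positivity, ?_⟩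
  intro a b i hi
  set U := Finset.Icc a b with hU
  set S := U.erase i with hSdef
  set g : (Fin d → ℤ) → ℕ := fun j => Finset.univ.sup fun s => (i s - j s).natAbs with hg
  have hg1 : ∀ j ∈ S, 1 ≤ g j := by
    intro j hj
    rcases Nat.eq_zero_or_pos (g j) with h0 | h
    swap
    · exact h
    exfalso
    apply (Finset.ne_of_mem_erase hj)
    funext s
    have h2 : (i s - j s).natAbs = 0 := by
      simpa using Finset.sup_eq_bot_iff (fun s => (i s - j s).natAbs) Finset.univ |>.mp h0 s
        (Finset.mem_univ s)
    omega
  have hcount : ∀ k : ℕ, (S.filter fun j => g j ≤ k).card ≤ (2*k+1)^d := by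
    intro k
    have hsub : (S.filter fun j => g j ≤ k) ⊆
        Finset.Icc (fun s => i s - k) (fun s => i s + k) := by
      intro j hj
      obtain ⟨-, hjk⟩ := Finset.mem_filter.mp hj
      rw [Finset.mem_Icc]
      have hall : ∀ s, (i s - j s).natAbs ≤ k := by
        intro s
        exact le_trans (Finset.le_sup (f := fun s => (i s - j s).natAbs) (Finset.mem_univ s)) hjk
      constructor <;> intro s <;>
        · have h2 : (i s - j s).natAbs ≤ k := hall s
          simp only []
          omega
    calc (S.filter fun j => g j ≤ k).card
        ≤ (Finset.Icc (fun s => i s - (k:ℤ)) (fun s => i s + k)).card :=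
          Finset.card_le_card hsub
      _ = ∏ s : Fin d, (Finset.Icc (i s - (k:ℤ)) (i s + k)).card := Pi.card_Icc _ _
      _ = (2*k+1)^d := by
          have : ∀ s : Fin d, (Finset.Icc (i s - (k:ℤ)) (i s + k)).card = 2*k+1 := by
            intro s
            rw [Int.card_Icc]
            omega
          simp [this]
  have hmain := lemA d hd ν hν0 g S hg1 hcount
  have hScard : S.card ≤ U.card := by
    apply Finset.card_le_card (Finset.erase_subset _ _)
  have hUpos : 1 ≤ U.card := Finset.card_pos.mpr ⟨i, hi⟩
  have hstep2 : ∑ m ∈ Finset.range S.card, (3:ℝ)^ν * ((m:ℝ)+1) ^ (-(ν/d))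
      ≤ (3:ℝ)^ν * ∑ m ∈ Finset.range U.card, ((m:ℝ)+1) ^ (-(ν/d)) := by
    rw [← Finset.mul_sum]
    apply mul_le_mul_of_nonneg_left ?_ (by positivity)
    apply Finset.sum_le_sum_of_subset_of_nonneg
    · exact Finset.range_subset_range.mpr hScard
    · intro m _ _; positivity
  have hsumB := sumB (ν/d) hs0 hs1 U.card
  have hlog : 0 ≤ Real.log U.card := Real.log_nonneg (by exact_mod_cast hUpos)
  have hrp : (0:ℝ) ≤ (U.card:ℝ) ^ (1 - ν/d) := Real.rpow_nonneg (by positivity) _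
  have h3 : (0:ℝ) < (3:ℝ)^ν := by positivity
  calc ∑ j ∈ S, ((g j : ℕ) : ℝ) ^ (-ν)
      ≤ ∑ m ∈ Finset.range S.card, (3:ℝ)^ν * ((m:ℝ)+1) ^ (-(ν/d)) := hmain
    _ ≤ (3:ℝ)^ν * ∑ m ∈ Finset.range U.card, ((m:ℝ)+1) ^ (-(ν/d)) := hstep2
    _ ≤ (3:ℝ)^ν * ((1 + 1/(1 - ν/d)) * (U.card:ℝ) ^ (1 - ν/d)) := by
        apply mul_le_mul_of_nonneg_left hsumB h3.le
    _ ≤ (3:ℝ)^ν * (1 + 1/(1 - ν/d)) * (1 + Real.log U.card) * (U.card:ℝ) ^ (1 - ν/d) := by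
        have hc : (0:ℝ) < 1 + 1/(1 - ν/d) := by
          have : (0:ℝ) < 1 - ν/d := by linarith
          positivity
        nlinarith [mul_nonneg (mul_nonneg h3.le hc.le) hrp]
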